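/- arXiv:1808.06204 — 2 statements merged into one kernel-verified Lean document; each statement's English description precedes it below -/
import Mathlib

section
/- Let P : ℝ^N × ℝ → ℝ and Q : ℝ → ℝ be continuous with P(x,s)/Q(s) → 0 uniformly in x as |s| → ∞. Let (u_n) be measurable functions ℝ^N → ℝ with sup_n ∫_{ℝ^N} |Q(u_n(x))| dx < ∞ and P(x, u_n(x)) → v(x) a.e. in ℝ^N. Then for any bounded Borel set B ⊂ ℝ^N, ∫_B |P(x, u_n(x)) − v(x)| dx → 0 as n → ∞. -/
open MeasureTheory Filter Topology

/-- Strauss-type compactness lemma, first part: if `P(x,s)/Q(s) → 0`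
uniformly in `x` as `|s| → ∞`, `sup_n ∫ |Q(u_n)| < ∞` and `P(x,u_n(x)) → v(x)` a.e.,
then `∫_B |P(x,u_n(x)) − v(x)| dx → 0` for every bounded Borel set `B`. -/
theorem stmt5 (N : ℕ) (P : EuclideanSpace ℝ (Fin N) → ℝ → ℝ) (Q : ℝ → ℝ)
    (hP : Continuous fun q : (EuclideanSpace ℝ (Fin N)) × ℝ => P q.1 q.2)
    (hQ : Continuous Q)
    (hlim : ∀ ε > (0 : ℝ), ∃ M > (0 : ℝ), ∀ x s, M ≤ |s| → |P x s| ≤ ε * |Q s|)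
    (u : ℕ → EuclideanSpace ℝ (Fin N) → ℝ)
    (hmeas : ∀ n, Measurable (u n))
    (hint : ∀ n, Integrable (fun x => Q (u n x)))
    (C : ℝ) (hsup : ∀ n, (∫ x, |Q (u n x)|) ≤ C)
    (v : EuclideanSpace ℝ (Fin N) → ℝ) (hv : Measurable v)
    (hae : ∀ᵐ x ∂(volume : Measure (EuclideanSpace ℝ (Fin N))),
      Tendsto (fun n => P x (u n x)) atTop (𝓝 (v x)))
    (B : Set (EuclideanSpace ℝ (Fin N))) (hBm : MeasurableSet B)
    (hBb : Bornology.IsBounded B) :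
    Tendsto (fun n => ∫ x in B, |P x (u n x) - v x|) atTop (𝓝 0) := by
  set f : ℕ → EuclideanSpace ℝ (Fin N) → ℝ := fun n x => P x (u n x) with hf
  set μ : Measure (EuclideanSpace ℝ (Fin N)) := volume.restrict B with hμ
  have hfmeas : ∀ n, Measurable (f n) := fun n =>
    hP.measurable.comp (measurable_id.prodMk (hmeas n))
  have hμB : μ Set.univ < ⊤ := by
    rw [hμ, Measure.restrict_apply_univ]
    exact hBb.measure_lt_top
  haveI : IsFiniteMeasure μ := ⟨hμB⟩
  -- the key pointwise bound on `B`
  have key : ∀ ε' > (0 : ℝ), ∃ K ≥ (0 : ℝ), ∀ n, ∀ x ∈ B,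
      |f n x| ≤ ε' * |Q (u n x)| + K := by
    intro ε' hε'
    obtain ⟨M, hM, hPM⟩ := hlim ε' hε'
    have hcpt : IsCompact ((closure B) ×ˢ Set.Icc (-M) M) :=
      hBb.isCompact_closure.prod isCompact_Icc
    obtain ⟨K0, hK0⟩ := hcpt.exists_bound_of_continuousOn hP.continuousOn
    refine ⟨max K0 0, le_max_right _ _, fun n x hx => ?_⟩
    by_cases h : M ≤ |u n x|
    · have := hPM x (u n x) h
      have hK : (0:ℝ) ≤ max K0 0 := le_max_right _ _
      linarith
    · push_neg at h
      have hmem : (x, u n x) ∈ (closure B) ×ˢ Set.Icc (-M) M := by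
        refine ⟨subset_closure hx, ?_⟩
        rw [Set.mem_Icc]
        constructor <;> [linarith [neg_abs_le (u n x)]; linarith [le_abs_self (u n x)]]
      have := hK0 _ hmem
      have hQnn : 0 ≤ ε' * |Q (u n x)| := by positivity
      calc |f n x| ≤ K0 := this
        _ ≤ max K0 0 := le_max_left _ _
        _ ≤ ε' * |Q (u n x)| + max K0 0 := by linarith
  -- the key lintegral bound
  have lbound : ∀ ε' > (0:ℝ), ∀ K ≥ (0:ℝ),
      (∀ n, ∀ x ∈ B, |f n x| ≤ ε' * |Q (u n x)| + K) →
      ∀ n (s : Set (EuclideanSpace ℝ (Fin N))), MeasurableSet s →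
      (∫⁻ x in s, ‖f n x‖₊ ∂μ) ≤
        ENNReal.ofReal (ε' * C) + ENNReal.ofReal K * μ s := by
    intro ε' hε' K hK hb n s hs
    have hb' : ∀ᵐ x ∂(μ.restrict s), (‖f n x‖₊ : ENNReal) ≤
        ENNReal.ofReal (ε' * |Q (u n x)|) + ENNReal.ofReal K := by
      refine ae_mono Measure.restrict_le_self ?_
      rw [hμ]
      refine (ae_restrict_iff' hBm).2 (ae_of_all _ fun x hx => ?_)
      have h1 := hb n x hx
      calc (‖f n x‖₊ : ENNReal) = ENNReal.ofReal |f n x| := by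
            rw [← Real.norm_eq_abs, ofReal_norm, enorm_eq_nnnorm]
        _ ≤ ENNReal.ofReal (ε' * |Q (u n x)| + K) := ENNReal.ofReal_le_ofReal h1
        _ ≤ _ := ENNReal.ofReal_add_le
    calc (∫⁻ x in s, ‖f n x‖₊ ∂μ)
        ≤ ∫⁻ x in s, (ENNReal.ofReal (ε' * |Q (u n x)|) + ENNReal.ofReal K) ∂μ :=
          lintegral_mono_ae hb'
      _ = (∫⁻ x in s, ENNReal.ofReal (ε' * |Q (u n x)|) ∂μ) + ENNReal.ofReal K * μ s := by
          rw [lintegral_add_right _ measurable_const, setLIntegral_const]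
      _ ≤ ENNReal.ofReal (ε' * C) + ENNReal.ofReal K * μ s := by
          gcongr
          calc (∫⁻ x in s, ENNReal.ofReal (ε' * |Q (u n x)|) ∂μ)
              ≤ ∫⁻ x, ENNReal.ofReal (ε' * |Q (u n x)|) := by
                refine le_trans (lintegral_mono' Measure.restrict_le_self le_rfl) ?_
                exact lintegral_mono' (by rw [hμ]; exact Measure.restrict_le_self) le_rfl
            _ = ENNReal.ofReal (∫ x, ε' * |Q (u n x)|) := by
                rw [← ofReal_integral_eq_lintegral_ofReal
                  (((hint n).abs).const_mul ε')
                  (ae_of_all _ fun x => by positivity)]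
            _ ≤ ENNReal.ofReal (ε' * C) := by
                refine ENNReal.ofReal_le_ofReal ?_
                rw [integral_const_mul]
                exact mul_le_mul_of_nonneg_left (hsup n) hε'.le
  -- integrability of `f n` on `B`
  have hfint : ∀ n, Integrable (f n) μ := by
    intro n
    obtain ⟨K, hK, hb⟩ := key 1 one_pos
    refine ⟨(hfmeas n).aestronglyMeasurable, ?_⟩
    rw [HasFiniteIntegral]
    calc (∫⁻ x, ‖f n x‖₊ ∂μ) = ∫⁻ x in Set.univ, ‖f n x‖₊ ∂μ := by
          rw [Measure.restrict_univ]
      _ ≤ ENNReal.ofReal (1 * C) + ENNReal.ofReal K * μ Set.univ :=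
          lbound 1 one_pos K hK hb n Set.univ MeasurableSet.univ
      _ < ⊤ := by
          exact ENNReal.add_lt_top.2 ⟨ENNReal.ofReal_lt_top,
            ENNReal.mul_lt_top ENNReal.ofReal_lt_top hμB⟩
  -- `v` is integrable on `B` (Fatou)
  have haeμ : ∀ᵐ x ∂μ, Tendsto (fun n => f n x) atTop (𝓝 (v x)) :=
    ae_restrict_of_ae hae
  have hvmem : MemLp v 1 μ := by
    refine ⟨hv.aestronglyMeasurable, ?_⟩
    rw [eLpNorm_one_eq_lintegral_enorm]
    obtain ⟨K, hK, hb⟩ := key 1 one_pos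
    have hlim' : ∀ᵐ x ∂μ, (‖v x‖₊ : ENNReal) =
        Filter.liminf (fun n => (‖f n x‖₊ : ENNReal)) atTop := by
      filter_upwards [haeμ] with x hx
      have : Tendsto (fun n => (‖f n x‖₊ : ENNReal)) atTop (𝓝 (‖v x‖₊ : ENNReal)) :=
        ENNReal.tendsto_coe.2 hx.nnnorm
      exact this.liminf_eq.symm
    calc (∫⁻ x, ‖v x‖₊ ∂μ)
        = ∫⁻ x, Filter.liminf (fun n => (‖f n x‖₊ : ENNReal)) atTop ∂μ :=
          lintegral_congr_ae hlim'
      _ ≤ Filter.liminf (fun n => ∫⁻ x, ‖f n x‖₊ ∂μ) atTop :=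
          lintegral_liminf_le (fun n => (hfmeas n).enorm)
      _ ≤ ENNReal.ofReal (1 * C) + ENNReal.ofReal K * μ Set.univ := by
          refine liminf_le_of_le (by isBoundedDefault) ?_
          refine fun b hb' => ?_
          obtain ⟨n, hn⟩ := hb'.exists
          refine hn.trans ?_
          calc (∫⁻ x, ‖f n x‖₊ ∂μ) = ∫⁻ x in Set.univ, ‖f n x‖₊ ∂μ := by
                rw [Measure.restrict_univ]
            _ ≤ _ := lbound 1 one_pos K hK hb n Set.univ MeasurableSet.univ
      _ < ⊤ := ENNReal.add_lt_top.2 ⟨ENNReal.ofReal_lt_top,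
            ENNReal.mul_lt_top ENNReal.ofReal_lt_top hμB⟩
  -- uniform integrability
  have hui : UnifIntegrable f 1 μ := by
    intro ε hε
    set ε' : ℝ := ε / (2 * (|C| + 1)) with hε'def
    have hε' : 0 < ε' := by positivity
    obtain ⟨K, hK, hb⟩ := key ε' hε'
    refine ⟨ε / (2 * (K + 1)), by positivity, fun n s hs hμs => ?_⟩
    rw [eLpNorm_indicator_eq_eLpNorm_restrict hs, eLpNorm_one_eq_lintegral_enorm]
    calc (∫⁻ x in s, ‖f n x‖₊ ∂μ)
        ≤ ENNReal.ofReal (ε' * C) + ENNReal.ofReal K * μ s :=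
          lbound ε' hε' K hK hb n s hs
      _ ≤ ENNReal.ofReal (ε / 2) + ENNReal.ofReal (ε / 2) := by
          gcongr
          · rw [hε'def, div_mul_eq_mul_div, div_le_div_iff₀ (by positivity) (by norm_num)]
            nlinarith [le_abs_self C, abs_nonneg C, hε.le]
          · calc ENNReal.ofReal K * μ s
                ≤ ENNReal.ofReal K * ENNReal.ofReal (ε / (2 * (K + 1))) := by gcongr
              _ = ENNReal.ofReal (K * (ε / (2 * (K + 1)))) :=
                  (ENNReal.ofReal_mul hK).symm
              _ ≤ ENNReal.ofReal (ε / 2) := by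
                  refine ENNReal.ofReal_le_ofReal ?_
                  rw [← mul_div_assoc, div_le_div_iff₀ (by positivity) (by norm_num)]
                  nlinarith [hε.le]
      _ = ENNReal.ofReal ε := by
          rw [← ENNReal.ofReal_add (by positivity) (by positivity)]
          norm_num
  -- Vitali convergence theorem
  have hvitali : Tendsto (fun n => eLpNorm (f n - v) 1 μ) atTop (𝓝 0) :=
    tendsto_Lp_finite_of_tendsto_ae le_rfl ENNReal.one_ne_top
      (fun n => (hfmeas n).aestronglyMeasurable) hvmem hui haeμ
  -- conclude
  have heq : ∀ n, (∫ x in B, |f n x - v x|) = (eLpNorm (f n - v) 1 μ).toReal := by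
    intro n
    have hm : AEStronglyMeasurable (f n - v) μ := ((hfmeas n).sub hv).aestronglyMeasurable
    rw [eLpNorm_one_eq_lintegral_enorm, ← integral_norm_eq_lintegral_enorm hm]
    simp [Pi.sub_apply, Real.norm_eq_abs, hμ]
  have := (ENNReal.tendsto_toReal ENNReal.zero_ne_top).comp hvitali
  simp only [Function.comp, ENNReal.toReal_zero] at this
  convert this using 2 with n
  exact heq n
end

section
/- Under the hypotheses of the preceding Strauss-type lemma, assume additionally that P(x,s)/Q(s) → 0 uniformly in x as s → 0, and that u_n(x) → 0 as |x| → ∞ uniformly with respect to n. Then P(·, u_n(·)) converges to v in L¹(ℝ^N) as n → ∞. -/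
open MeasureTheory Filter Topology

/-- Strauss-type compactness lemma, second part: under the hypotheses of the
first part, if moreover `P(x,s)/Q(s) → 0` uniformly in `x` as `s → 0` and `u_n(x) → 0` as
`|x| → ∞` uniformly in `n`, then `P(·,u_n(·)) → v` in `L¹(ℝ^N)`. -/
theorem stmt6 (N : ℕ) (P : EuclideanSpace ℝ (Fin N) → ℝ → ℝ) (Q : ℝ → ℝ)
    (hP : Continuous fun q : (EuclideanSpace ℝ (Fin N)) × ℝ => P q.1 q.2)
    (hQ : Continuous Q)
    (hlim : ∀ ε > (0 : ℝ), ∃ M > (0 : ℝ), ∀ x s, M ≤ |s| → |P x s| ≤ ε * |Q s|)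
    (hlim0 : ∀ ε > (0 : ℝ), ∃ δ > (0 : ℝ), ∀ x s, |s| ≤ δ → |P x s| ≤ ε * |Q s|)
    (u : ℕ → EuclideanSpace ℝ (Fin N) → ℝ)
    (hmeas : ∀ n, Measurable (u n))
    (hint : ∀ n, Integrable (fun x => Q (u n x)))
    (C : ℝ) (hsup : ∀ n, (∫ x, |Q (u n x)|) ≤ C)
    (v : EuclideanSpace ℝ (Fin N) → ℝ) (hv : Measurable v)
    (hae : ∀ᵐ x ∂(volume : Measure (EuclideanSpace ℝ (Fin N))),
      Tendsto (fun n => P x (u n x)) atTop (𝓝 (v x)))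
    (hdecay : ∀ δ > (0 : ℝ), ∃ R > (0 : ℝ), ∀ n, ∀ x : EuclideanSpace ℝ (Fin N),
      R ≤ ‖x‖ → |u n x| ≤ δ) :
    Integrable v ∧
      Tendsto (fun n => ∫ x, |P x (u n x) - v x|) atTop (𝓝 0) := by
  have hfm : ∀ n, Measurable fun x => P x (u n x) := fun n =>
    hP.measurable.comp (measurable_id.prodMk (hmeas n))
  have hC0 : 0 ≤ C := le_trans (integral_nonneg fun x => abs_nonneg _) (hsup 0)
  -- key: for each ε > 0 there is an integrable nonneg h with |P x (u n x)| ≤ ε|Q(u n x)| + h x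
  have key : ∀ ε : ℝ, 0 < ε → ∃ h : EuclideanSpace ℝ (Fin N) → ℝ,
      Integrable h ∧ Measurable h ∧ (∀ x, 0 ≤ h x) ∧
      ∀ n x, |P x (u n x)| ≤ ε * |Q (u n x)| + h x := by
    intro ε hε
    obtain ⟨M, hM, hMle⟩ := hlim ε hε
    obtain ⟨δ, hδ, hδle⟩ := hlim0 ε hε
    obtain ⟨R, hR, hRle⟩ := hdecay δ hδ
    obtain ⟨K, hK⟩ := ((isCompact_closedBall (0 : EuclideanSpace ℝ (Fin N)) R).prod
      (isCompact_Icc (a := -M) (b := M))).exists_bound_of_continuousOn hP.continuousOn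
    refine ⟨(Metric.closedBall (0 : EuclideanSpace ℝ (Fin N)) R).indicator
      (fun _ => max K 0), ?_, ?_, ?_, ?_⟩
    · refine (integrable_indicator_iff measurableSet_closedBall).2 ?_
      exact integrableOn_const (isCompact_closedBall _ _).measure_lt_top.ne
    · exact measurable_const.indicator measurableSet_closedBall
    · exact fun x => Set.indicator_nonneg (fun _ _ => le_max_right _ _) x
    · intro n x
      have hQn : 0 ≤ ε * |Q (u n x)| := mul_nonneg hε.le (abs_nonneg _)
      have hind : (0:ℝ) ≤ (Metric.closedBall (0 : EuclideanSpace ℝ (Fin N)) R).indicator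
          (fun _ => max K 0) x := Set.indicator_nonneg (fun _ _ => le_max_right _ _) x
      by_cases hx : R ≤ ‖x‖
      · have h1 := hδle x (u n x) (hRle n x hx)
        linarith
      · push_neg at hx
        have hxB : x ∈ Metric.closedBall (0 : EuclideanSpace ℝ (Fin N)) R := by
          simpa [Metric.mem_closedBall, dist_zero_right] using hx.le
        rw [Set.indicator_of_mem hxB]
        by_cases hs : M ≤ |u n x|
        · have h1 := hMle x (u n x) hs
          have h2 : (0:ℝ) ≤ max K 0 := le_max_right _ _
          linarith
        · push_neg at hs
          have hmem : (x, u n x) ∈ Metric.closedBall (0 : EuclideanSpace ℝ (Fin N)) R ×ˢ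
              Set.Icc (-M) M := ⟨hxB, abs_le.1 hs.le⟩
          have h1 : |P x (u n x)| ≤ K := by
            simpa [Real.norm_eq_abs] using hK _ hmem
          have h2 : K ≤ max K 0 := le_max_left _ _
          linarith
  -- integrability of v
  have hv_int : Integrable v := by
    obtain ⟨h, hh_int, hh_m, hh0, hbd⟩ := key 1 one_pos
    refine ⟨hv.aestronglyMeasurable, ?_⟩
    rw [hasFiniteIntegral_iff_norm]
    have hvae : ∀ᵐ x ∂(volume : Measure (EuclideanSpace ℝ (Fin N))),
        ENNReal.ofReal ‖v x‖ =
          liminf (fun n => ENNReal.ofReal ‖P x (u n x)‖) atTop := by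
      filter_upwards [hae] with x hx
      exact (((ENNReal.continuous_ofReal.tendsto _).comp hx.norm)).liminf_eq.symm
    calc ∫⁻ x, ENNReal.ofReal ‖v x‖ =
        ∫⁻ x, liminf (fun n => ENNReal.ofReal ‖P x (u n x)‖) atTop := lintegral_congr_ae hvae
      _ ≤ liminf (fun n => ∫⁻ x, ENNReal.ofReal ‖P x (u n x)‖) atTop :=
          lintegral_liminf_le fun n => (ENNReal.measurable_ofReal.comp (hfm n).norm)
      _ ≤ liminf (fun _ : ℕ => ENNReal.ofReal C + ENNReal.ofReal (∫ x, h x)) atTop := by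
          refine Filter.liminf_le_liminf (Filter.Eventually.of_forall fun n => ?_)
          calc ∫⁻ x, ENNReal.ofReal ‖P x (u n x)‖
              ≤ ∫⁻ x, (ENNReal.ofReal (|Q (u n x)|) + ENNReal.ofReal (h x)) := by
                refine lintegral_mono fun x => ?_
                rw [Real.norm_eq_abs]
                calc ENNReal.ofReal |P x (u n x)|
                    ≤ ENNReal.ofReal (1 * |Q (u n x)| + h x) :=
                      ENNReal.ofReal_le_ofReal (hbd n x)
                  _ ≤ ENNReal.ofReal (|Q (u n x)|) + ENNReal.ofReal (h x) := by
                      rw [one_mul]; exact ENNReal.ofReal_add_le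
            _ = (∫⁻ x, ENNReal.ofReal (|Q (u n x)|)) + ∫⁻ x, ENNReal.ofReal (h x) :=
                lintegral_add_left (ENNReal.measurable_ofReal.comp (hQ.measurable.comp (hmeas n)).abs) _
            _ ≤ ENNReal.ofReal C + ENNReal.ofReal (∫ x, h x) := by
                gcongr
                · rw [← ofReal_integral_eq_lintegral_ofReal (hint n).abs
                    (Filter.Eventually.of_forall fun x => abs_nonneg _)]
                  exact ENNReal.ofReal_le_ofReal (hsup n)
                · rw [← ofReal_integral_eq_lintegral_ofReal hh_int
                    (Filter.Eventually.of_forall hh0)]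
      _ = ENNReal.ofReal C + ENNReal.ofReal (∫ x, h x) := liminf_const _
      _ < ⊤ := by finiteness
  refine ⟨hv_int, ?_⟩
  -- main convergence
  rw [Metric.tendsto_atTop]
  intro ε' hε'
  set ε := ε' / (2 * (C + 1)) with hεdef
  have hε : 0 < ε := by positivity
  obtain ⟨h, hh_int, hh_m, hh0, hbd⟩ := key ε hε
  set φ : ℕ → EuclideanSpace ℝ (Fin N) → ℝ :=
    fun n x => max (|P x (u n x) - v x| - ε * |Q (u n x)|) 0 with hφdef
  have hφm : ∀ n, Measurable (φ n) :=
    fun n => (((hfm n).sub hv).abs.sub ((hQ.measurable.comp (hmeas n)).abs.const_mul ε)).max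
      measurable_const
  have hφ0 : ∀ n x, 0 ≤ φ n x := fun n x => le_max_right _ _
  have hφle : ∀ n x, φ n x ≤ h x + |v x| := by
    intro n x
    refine max_le ?_ (add_nonneg (hh0 x) (abs_nonneg _))
    have h1 := hbd n x
    have h2 : |P x (u n x) - v x| ≤ |P x (u n x)| + |v x| := abs_sub _ _
    linarith
  have hbound_int : Integrable (fun x => h x + |v x|) := hh_int.add hv_int.abs
  have hφint : ∀ n, Integrable (φ n) := by
    intro n
    refine hbound_int.mono (hφm n).aestronglyMeasurable ?_
    refine Filter.Eventually.of_forall fun x => ?_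
    rw [Real.norm_eq_abs, Real.norm_eq_abs, abs_of_nonneg (hφ0 n x),
      abs_of_nonneg (add_nonneg (hh0 x) (abs_nonneg _))]
    exact hφle n x
  -- DCT: ∫ φ n → 0
  have hDCT : Tendsto (fun n => ∫ x, φ n x) atTop (𝓝 0) := by
    have := tendsto_integral_of_dominated_convergence (μ := (volume : Measure (EuclideanSpace ℝ (Fin N))))
      (F := φ) (f := fun _ => 0) (bound := fun x => h x + |v x|)
      (fun n => (hφm n).aestronglyMeasurable) hbound_int
      (fun n => Filter.Eventually.of_forall fun x => by
        rw [Real.norm_eq_abs, abs_of_nonneg (hφ0 n x)]; exact hφle n x)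
      (by
        filter_upwards [hae] with x hx
        have h1 : Tendsto (fun n => |P x (u n x) - v x|) atTop (𝓝 0) := by
          have h2 : Tendsto (fun n => P x (u n x) - v x) atTop (𝓝 (v x - v x)) :=
            hx.sub (tendsto_const_nhds (x := v x))
          rw [sub_self] at h2
          simpa using h2.abs
        refine squeeze_zero (fun n => hφ0 n x) (fun n => ?_) h1
        refine max_le ?_ (abs_nonneg _)
        have : 0 ≤ ε * |Q (u n x)| := by positivity
        linarith)
    simpa using this
  rw [Metric.tendsto_atTop] at hDCT
  obtain ⟨n₀, hn₀⟩ := hDCT (ε' / 2) (by positivity)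
  refine ⟨n₀, fun n hn => ?_⟩
  have hφsmall : ∫ x, φ n x < ε' / 2 := by
    have := hn₀ n hn
    rwa [Real.dist_eq, sub_zero, abs_of_nonneg (integral_nonneg (hφ0 n))] at this
  have hsum_int : Integrable fun x => φ n x + ε * |Q (u n x)| :=
    (hφint n).add ((hint n).abs.const_mul ε)
  have hptle : ∀ x, |P x (u n x) - v x| ≤ φ n x + ε * |Q (u n x)| := by
    intro x
    have := le_max_left (|P x (u n x) - v x| - ε * |Q (u n x)|) 0
    linarith
  have habs_int : Integrable fun x => |P x (u n x) - v x| := by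
    refine hsum_int.mono ((hfm n).sub hv).abs.aestronglyMeasurable ?_
    refine Filter.Eventually.of_forall fun x => ?_
    have h0 : (0:ℝ) ≤ φ n x + ε * |Q (u n x)| :=
      add_nonneg (hφ0 n x) (by positivity)
    rw [Real.norm_eq_abs, Real.norm_eq_abs, abs_abs, abs_of_nonneg h0]
    exact hptle x
  have hle : ∫ x, |P x (u n x) - v x| ≤ ∫ x, (φ n x + ε * |Q (u n x)|) :=
    integral_mono habs_int hsum_int hptle
  rw [integral_add (hφint n) ((hint n).abs.const_mul ε), integral_const_mul] at hle
  have hQle : ε * ∫ x, |Q (u n x)| ≤ ε * C := mul_le_mul_of_nonneg_left (hsup n) hε.le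
  have hεC : ε * C < ε' / 2 := by
    rw [hεdef]
    rw [div_mul_eq_mul_div, div_lt_div_iff₀ (by positivity) (by norm_num)]
    nlinarith
  rw [Real.dist_eq, sub_zero, abs_of_nonneg (integral_nonneg fun x => abs_nonneg _)]
  linarith
end
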